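/- On-policy stochastic NPG fails with positive probability: consider an on-policy process with the stochastic NPG update θ_{t+1} := θ_t + η·r̂_{a_t} (η > 0), where r̂_{a_t} is the IS estimate at θ_t with sampled action a_t. Then for every action a ∈ [K] (in particular every sub-optimal action): P(a_t = a for all t ≥ 1) ≥ exp(−(e^{η·r(a)}/(η·r(a)))·(Σ_{a' ≠ a} e^{θ_1(a')})/e^{θ_1(a)}) > 0, and on the event {a_t = a for all t ≥ 1} one has π_{θ_t}(a) → 1 as t → ∞. Hence for every a ∈ [K], with positive probability π_{θ_t}(a) → 1. -/

import Mathlib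

open Finset Real Filter MeasureTheory

/-- Softmax policy: `π_θ(a) = exp(θ(a)) / Σ_{a'} exp(θ(a'))`. -/
noncomputable def softmax {K : ℕ} (θ : Fin K → ℝ) (a : Fin K) : ℝ :=
  Real.exp (θ a) / ∑ a', Real.exp (θ a')

/-- On-policy importance-sampling (IS) reward estimate for sampled action `a`:
`r̂_a(a') = 1{a' = a}·r(a')/π_θ(a')`. -/
noncomputable def isEst {K : ℕ} (r : Fin K → ℝ) (a : Fin K) (θ : Fin K → ℝ)
    (a' : Fin K) : ℝ :=
  if a' = a then r a' / softmax θ a' else 0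

lemma softmax_pos {K : ℕ} (θ : Fin K → ℝ) (a : Fin K) : 0 < softmax θ a := by
  have h : 0 < ∑ a', Real.exp (θ a') :=
    Finset.sum_pos (fun i _ => Real.exp_pos _) ⟨a, Finset.mem_univ a⟩
  exact div_pos (Real.exp_pos _) h

lemma softmax_le_one {K : ℕ} (θ : Fin K → ℝ) (a : Fin K) : softmax θ a ≤ 1 := by
  have h : Real.exp (θ a) ≤ ∑ a', Real.exp (θ a') :=
    Finset.single_le_sum (fun i _ => (Real.exp_pos _).le) (Finset.mem_univ a)
  have hp : 0 < ∑ a', Real.exp (θ a') :=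
    Finset.sum_pos (fun i _ => Real.exp_pos _) ⟨a, Finset.mem_univ a⟩
  exact (div_le_one hp).mpr h

noncomputable def detSeq {K : ℕ} (r : Fin K → ℝ) (a : Fin K) (η : ℝ)
    (θinit : Fin K → ℝ) : ℕ → Fin K → ℝ
  | 0 => θinit
  | (t+1) => fun a' => detSeq r a η θinit t a' + η * isEst r a (detSeq r a η θinit t) a'

section detfacts
variable {K : ℕ} (r : Fin K → ℝ) (a : Fin K) (η : ℝ) (θinit : Fin K → ℝ)

lemma detSeq_off (t : ℕ) (a' : Fin K) (h : a' ≠ a) :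
    detSeq r a η θinit t a' = θinit a' := by
  induction t with
  | zero => rfl
  | succ t ih => simp [detSeq, isEst, h, ih]

lemma detSeq_diag (t : ℕ) :
    detSeq r a η θinit (t+1) a
      = detSeq r a η θinit t a + η * (r a / softmax (detSeq r a η θinit t) a) := by
  simp [detSeq, isEst]

lemma detSeq_sum (t : ℕ) :
    ∑ a', Real.exp (detSeq r a η θinit t a')
      = Real.exp (detSeq r a η θinit t a)
        + ∑ a' ∈ Finset.univ.filter (fun a' => a' ≠ a), Real.exp (θinit a') := by
  rw [← Finset.add_sum_erase _ _ (Finset.mem_univ a)]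
  congr 1
  rw [show Finset.univ.erase a = Finset.univ.filter (fun a' => a' ≠ a) from (Finset.filter_ne' _ _).symm]
  exact Finset.sum_congr rfl (fun x hx => by
    rw [detSeq_off r a η θinit t x (Finset.mem_filter.mp hx).2])

lemma detSeq_softmax (t : ℕ) :
    softmax (detSeq r a η θinit t) a
      = Real.exp (detSeq r a η θinit t a) /
        (Real.exp (detSeq r a η θinit t a)
          + ∑ a' ∈ Finset.univ.filter (fun a' => a' ≠ a), Real.exp (θinit a')) := by
  rw [softmax, detSeq_sum]

lemma detSeq_lb (hr : 0 < r a) (hη : 0 < η) (t : ℕ) :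
    θinit a + t * (η * r a) ≤ detSeq r a η θinit t a := by
  induction t with
  | zero => simp [detSeq]
  | succ t ih =>
    rw [detSeq_diag]
    have hp1 : softmax (detSeq r a η θinit t) a ≤ 1 := softmax_le_one _ _
    have hp0 : 0 < softmax (detSeq r a η θinit t) a := softmax_pos _ _
    have : r a ≤ r a / softmax (detSeq r a η θinit t) a := by
      rw [le_div_iff₀ hp0]; nlinarith
    push_cast
    nlinarith

end detfacts

lemma aux_exp_div' (u S : ℝ) (hu : 0 < u) (hS : 0 ≤ S) :
    Real.exp (-(S / u)) ≤ u / (u + S) := by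
  have h1 : S / u + 1 ≤ Real.exp (S / u) := Real.add_one_le_exp _
  have h2 : 0 < u + S := by linarith
  rw [Real.exp_neg, inv_eq_one_div, div_le_div_iff₀ (Real.exp_pos _) h2]
  have h4 : u * (S / u + 1) = u + S := by field_simp; ring
  nlinarith [Real.exp_pos (S/u)]

lemma geom_sum_le_of_lt_one' {q : ℝ} (h0 : 0 ≤ q) (h1 : q < 1) (n : ℕ) :
    ∑ s ∈ Finset.range n, q ^ s ≤ 1 / (1 - q) := by
  have hq : q ≠ 1 := ne_of_lt h1
  rw [geom_sum_eq hq]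
  have h3 : (q ^ n - 1) / (q - 1) = (1 - q ^ n) / (1 - q) := by
    rw [div_eq_div_iff (by linarith) (by linarith)]; ring
  rw [h3, div_le_div_iff₀ (by linarith) (by linarith)]
  nlinarith [pow_nonneg h0 n]

lemma detSeq_prod_lb {K : ℕ} (r : Fin K → ℝ) (a : Fin K) (η : ℝ)
    (θinit : Fin K → ℝ) (hr : 0 < r a) (hη : 0 < η) (n : ℕ) :
    Real.exp (-(Real.exp (η * r a) / (η * r a)) *
        ((∑ a' ∈ Finset.univ.filter (fun a' => a' ≠ a), Real.exp (θinit a')) /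
          Real.exp (θinit a)))
      ≤ ∏ s ∈ Finset.range n, softmax (detSeq r a η θinit s) a := by
  set S := ∑ a' ∈ Finset.univ.filter (fun a' => a' ≠ a), Real.exp (θinit a') with hSdef
  have hS : 0 ≤ S := Finset.sum_nonneg (fun i _ => (Real.exp_pos _).le)
  set c := η * r a with hcdef
  have hc : 0 < c := mul_pos hη hr
  set z : ℕ → ℝ := fun s => detSeq r a η θinit s a with hzdef
  -- pointwise bound
  have hstep : ∀ s, Real.exp (-(S / Real.exp (z s))) ≤ softmax (detSeq r a η θinit s) a := by
    intro s
    rw [detSeq_softmax]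
    exact aux_exp_div' _ S (Real.exp_pos _) hS
  have hprod : Real.exp (-∑ s ∈ Finset.range n, S / Real.exp (z s))
      ≤ ∏ s ∈ Finset.range n, softmax (detSeq r a η θinit s) a := by
    rw [← Finset.sum_neg_distrib, Real.exp_sum]
    exact Finset.prod_le_prod (fun s _ => (Real.exp_pos _).le) (fun s _ => hstep s)
  refine le_trans ?_ hprod
  rw [Real.exp_le_exp]
  rw [neg_mul, neg_le_neg_iff]
  -- ∑ S / exp (z s) ≤ (exp c / c) * (S / exp (θinit a))
  set q := Real.exp (-c) with hqdef
  have hq0 : 0 ≤ q := (Real.exp_pos _).le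
  have hq1 : q < 1 := by
    rw [hqdef, Real.exp_lt_one_iff]; linarith
  have hterm : ∀ s : ℕ, S / Real.exp (z s) ≤ S / Real.exp (θinit a) * q ^ s := by
    intro s
    have hzlb : θinit a + s * c ≤ z s := detSeq_lb r a η θinit hr hη s
    have hEq : S / Real.exp (θinit a) * q ^ s = S / Real.exp (θinit a + s * c) := by
      rw [hqdef, ← Real.exp_nat_mul, Real.exp_add, mul_neg, Real.exp_neg]
      field_simp
    rw [hEq]
    gcongr <;> first
      | exact hS
      | exact Real.exp_le_exp.mpr hzlb
      | positivity
  have hgeom : ∑ s ∈ Finset.range n, q ^ s ≤ 1 / (1 - q) :=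
    geom_sum_le_of_lt_one' hq0 hq1 n
  have hfrac : 1 / (1 - q) ≤ Real.exp c / c := by
    rw [div_le_div_iff₀ (by linarith) hc]
    have h5 : Real.exp c * q = 1 := by
      rw [hqdef, ← Real.exp_add]; simp
    have h6 : c + 1 ≤ Real.exp c := Real.add_one_le_exp c
    nlinarith
  have hnn : 0 ≤ S / Real.exp (θinit a) := div_nonneg hS (Real.exp_pos _).le
  calc ∑ s ∈ Finset.range n, S / Real.exp (z s)
      ≤ ∑ s ∈ Finset.range n, S / Real.exp (θinit a) * q ^ s :=
        Finset.sum_le_sum (fun s _ => hterm s)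
    _ = S / Real.exp (θinit a) * ∑ s ∈ Finset.range n, q ^ s := by
        rw [Finset.mul_sum]
    _ ≤ S / Real.exp (θinit a) * (1 / (1 - q)) :=
        mul_le_mul_of_nonneg_left hgeom hnn
    _ ≤ S / Real.exp (θinit a) * (Real.exp c / c) :=
        mul_le_mul_of_nonneg_left hfrac hnn
    _ = Real.exp c / c * (S / Real.exp (θinit a)) := mul_comm _ _

lemma detSeq_div_le {K : ℕ} (r : Fin K → ℝ) (a : Fin K) (η : ℝ)
    (θinit : Fin K → ℝ) (hr : 0 < r a) (hη : 0 < η) (S : ℝ) (hS : 0 ≤ S) (t : ℕ) :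
    S / Real.exp (detSeq r a η θinit t a)
      ≤ S / Real.exp (θinit a) * (Real.exp (-(η * r a))) ^ t := by
  have hzlb : θinit a + t * (η * r a) ≤ detSeq r a η θinit t a :=
    detSeq_lb r a η θinit hr hη t
  have hEq : S / Real.exp (θinit a) * (Real.exp (-(η * r a))) ^ t
      = S / Real.exp (θinit a + t * (η * r a)) := by
    rw [← Real.exp_nat_mul, Real.exp_add, mul_neg, Real.exp_neg]
    field_simp
  rw [hEq]
  gcongr <;> first
    | exact hS
    | exact Real.exp_le_exp.mpr hzlb
    | positivity

lemma one_sub_div_le (u S : ℝ) (hu : 0 < u) (hS : 0 ≤ S) :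
    1 - S / u ≤ u / (u + S) := by
  have h2 : 0 < u + S := by linarith
  have h3 : u / (u + S) = 1 - S / (u + S) := by field_simp; ring
  rw [h3]
  gcongr <;> linarith

/-- On-policy stochastic NPG fails with positive probability: for every action `a`,
with the update `θ_{t+1} = θ_t + η·r̂_{a_t}`, the probability of sampling `a`
forever is at least `exp(−(e^{η·r(a)}/(η·r(a)))·(Σ_{a'≠a} e^{θ_1(a')})/e^{θ_1(a)}) > 0`,
and on that event `π_{θ_t}(a) → 1`. (Here `θ 0` is the paper's `θ_1` and `act t`
the paper's `a_{t+1}`.) -/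
theorem stochastic_npg_fails_with_positive_probability
    {K : ℕ} (hK : 2 ≤ K) (r : Fin K → ℝ)
    (hr : ∀ a, 0 < r a ∧ r a ≤ 1)
    (astar : Fin K) (hstar : ∀ a, a ≠ astar → r a < r astar)
    (η : ℝ) (hη : 0 < η)
    {Ω : Type*} {mΩ : MeasurableSpace Ω} (P : Measure Ω) [IsProbabilityMeasure P]
    (F : Filtration ℕ mΩ)
    (act : ℕ → Ω → Fin K) (θ : ℕ → Ω → Fin K → ℝ)
    (θinit : Fin K → ℝ) (hθ0 : ∀ ω, θ 0 ω = θinit)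
    (hθmeas : ∀ t, Measurable[F t] (θ t))
    (hactmeas : ∀ t, Measurable[F (t + 1)] (act t))
    (hcond : ∀ t b, P[(fun ω => if act t ω = b then (1 : ℝ) else 0)|F t]
      =ᵐ[P] fun ω => softmax (θ t ω) b)
    (hupd : ∀ t ω, θ (t + 1) ω = fun a' =>
      θ t ω a' + η * isEst r (act t ω) (θ t ω) a') :
    ∀ a : Fin K,
      ENNReal.ofReal
          (Real.exp (-(Real.exp (η * r a) / (η * r a)) *
            ((∑ a' ∈ Finset.univ.filter (fun a' => a' ≠ a), Real.exp (θinit a')) /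
              Real.exp (θinit a)))) ≤
        P {ω | ∀ t, act t ω = a} ∧
      0 < P {ω | ∀ t, act t ω = a} ∧
      ∀ ω, (∀ t, act t ω = a) →
        Tendsto (fun t => softmax (θ t ω) a) atTop (nhds 1) := by
  intro a
  set S := ∑ a' ∈ Finset.univ.filter (fun a' => a' ≠ a), Real.exp (θinit a') with hSdef
  have hS : 0 ≤ S := Finset.sum_nonneg (fun i _ => (Real.exp_pos _).le)
  set E : ℝ := Real.exp (-(Real.exp (η * r a) / (η * r a)) * (S / Real.exp (θinit a)))
    with hEdef
  set A : ℕ → Set Ω := fun n => {ω | ∀ s, s < n → act s ω = a} with hAdef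
  -- θ coincides with the deterministic sequence on A n
  have hθA : ∀ n (ω : Ω), (∀ s, s < n → act s ω = a) → θ n ω = detSeq r a η θinit n := by
    intro n
    induction n with
    | zero => intro ω _; exact hθ0 ω
    | succ n ih =>
      intro ω h
      rw [hupd n ω, ih ω (fun s hs => h s (hs.trans (Nat.lt_succ_self n))),
        h n (Nat.lt_succ_self n)]
      rfl
  have hAmeasF : ∀ n, MeasurableSet[F n] (A n) := by
    intro n
    have hA : A n = ⋂ s ∈ Finset.range n, act s ⁻¹' {a} := by
      ext ω; simp [hAdef]
    rw [hA]
    refine MeasurableSet.biInter (Set.to_countable _) (fun s hs => ?_)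
    have hs' : s + 1 ≤ n := Finset.mem_range.mp hs
    exact ((hactmeas s).mono (F.mono hs') le_rfl) (measurableSet_singleton a)
  have hAmeas : ∀ n, MeasurableSet (A n) := fun n => F.le n _ (hAmeasF n)
  have hAsucc : ∀ n, A (n + 1) = A n ∩ (act n ⁻¹' {a}) := by
    intro n
    ext ω
    simp only [hAdef, Set.mem_setOf_eq, Set.mem_inter_iff, Set.mem_preimage,
      Set.mem_singleton_iff]
    constructor
    · intro h; exact ⟨fun s hs => h s (by omega), h n (by omega)⟩
    · rintro ⟨h1, h2⟩ s hs
      rcases Nat.lt_succ_iff_lt_or_eq.mp hs with h | h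
      · exact h1 s h
      · subst h; exact h2
  have hPA : ∀ n, (P (A n)).toReal
      = ∏ s ∈ Finset.range n, softmax (detSeq r a η θinit s) a := by
    intro n
    induction n with
    | zero =>
      have h0 : A 0 = Set.univ := by ext ω; simp [hAdef]
      simp [h0]
    | succ n ih =>
      have hindrw : (fun ω => if act n ω = a then (1 : ℝ) else 0)
          = (act n ⁻¹' {a}).indicator (fun _ => (1 : ℝ)) := by
        ext ω; by_cases h : act n ω = a <;> simp [Set.indicator_apply, h]
      have hpre : MeasurableSet (act n ⁻¹' {a}) :=
        F.le (n + 1) _ ((hactmeas n) (measurableSet_singleton a))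
      have hint : Integrable (fun ω => if act n ω = a then (1 : ℝ) else 0) P := by
        rw [hindrw]
        exact (integrable_const (1 : ℝ)).indicator hpre
      have hstep : (P (A (n + 1))).toReal
          = (P (A n)).toReal * softmax (detSeq r a η θinit n) a := by
        calc (P (A (n + 1))).toReal
            = ∫ ω in A n, (if act n ω = a then (1 : ℝ) else 0) ∂P := by
              rw [hAsucc n]
              rw [show (fun ω => if act n ω = a then (1 : ℝ) else 0) =
                (act n ⁻¹' {a}).indicator (fun _ => (1 : ℝ)) from hindrw]
              rw [MeasureTheory.setIntegral_indicator hpre]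
              rw [MeasureTheory.setIntegral_const, smul_eq_mul, mul_one,
                Set.inter_comm]
              rfl
          _ = ∫ ω in A n,
                (P[(fun ω => if act n ω = a then (1 : ℝ) else 0)|F n]) ω ∂P :=
              (MeasureTheory.setIntegral_condExp (F.le n) hint (hAmeasF n)).symm
          _ = ∫ ω in A n, softmax (θ n ω) a ∂P := by
              refine MeasureTheory.setIntegral_congr_ae (hAmeas n) ?_
              filter_upwards [hcond n a] with ω h _
              exact h
          _ = ∫ ω in A n, softmax (detSeq r a η θinit n) a ∂P := by
              refine MeasureTheory.setIntegral_congr_fun (hAmeas n) (fun ω hω => ?_)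
              rw [hθA n ω hω]
          _ = (P (A n)).toReal * softmax (detSeq r a η θinit n) a := by
              rw [MeasureTheory.setIntegral_const, smul_eq_mul]
              rfl
      rw [hstep, ih, Finset.prod_range_succ]
  have hPAn : ∀ n, ENNReal.ofReal E ≤ P (A n) := by
    intro n
    have h1 : E ≤ (P (A n)).toReal := by
      rw [hPA n]
      exact detSeq_prod_lb r a η θinit (hr a).1 hη n
    calc ENNReal.ofReal E ≤ ENNReal.ofReal ((P (A n)).toReal) :=
          ENNReal.ofReal_le_ofReal h1
      _ = P (A n) := ENNReal.ofReal_toReal (measure_ne_top P _)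
  have hInter : {ω | ∀ t, act t ω = a} = ⋂ n, A n := by
    ext ω
    simp only [Set.mem_setOf_eq, Set.mem_iInter, hAdef]
    exact ⟨fun h n s _ => h s, fun h t => h (t + 1) t (Nat.lt_succ_self t)⟩
  have hanti : Antitone A := fun m n hmn ω h s hs => h s (lt_of_lt_of_le hs hmn)
  have hTend : Tendsto (fun n => P (A n)) atTop (nhds (P (⋂ n, A n))) :=
    tendsto_measure_iInter_atTop (fun n => (hAmeas n).nullMeasurableSet) hanti ⟨0, measure_ne_top P _⟩
  have hbound : ENNReal.ofReal E ≤ P {ω | ∀ t, act t ω = a} := by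
    rw [hInter]
    exact ge_of_tendsto hTend (Filter.Eventually.of_forall hPAn)
  refine ⟨hbound, lt_of_lt_of_le (ENNReal.ofReal_pos.mpr (Real.exp_pos _)) hbound, ?_⟩
  -- tendsto part
  intro ω hω
  have hθeq : ∀ t, θ t ω = detSeq r a η θinit t :=
    fun t => hθA t ω (fun s _ => hω s)
  have hfun : (fun t => softmax (θ t ω) a)
      = fun t => softmax (detSeq r a η θinit t) a :=
    funext (fun t => by rw [hθeq t])
  rw [hfun]
  set q : ℝ := Real.exp (-(η * r a)) with hqdef
  have hq0 : 0 ≤ q := (Real.exp_pos _).le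
  have hq1 : q < 1 := by
    rw [hqdef, Real.exp_lt_one_iff]
    nlinarith [(hr a).1]
  have hlow : ∀ t : ℕ, 1 - S / Real.exp (θinit a) * q ^ t
      ≤ softmax (detSeq r a η θinit t) a := by
    intro t
    have h1 : 1 - S / Real.exp (detSeq r a η θinit t a)
        ≤ softmax (detSeq r a η θinit t) a := by
      rw [detSeq_softmax]
      exact one_sub_div_le _ _ (Real.exp_pos _) hS
    have h2 := detSeq_div_le r a η θinit (hr a).1 hη S hS t
    linarith
  have hup : ∀ t : ℕ, softmax (detSeq r a η θinit t) a ≤ 1 :=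
    fun t => softmax_le_one _ _
  have hlowtend : Tendsto (fun t : ℕ => 1 - S / Real.exp (θinit a) * q ^ t)
      atTop (nhds 1) := by
    have h3 : Tendsto (fun t : ℕ => S / Real.exp (θinit a) * q ^ t) atTop (nhds 0) := by
      have := (tendsto_pow_atTop_nhds_zero_of_lt_one hq0 hq1).const_mul
        (S / Real.exp (θinit a))
      simpa using this
    have h4 := (tendsto_const_nhds :
      Tendsto (fun _ : ℕ => (1 : ℝ)) atTop (nhds 1)).sub h3
    simpa using h4
  exact tendsto_of_tendsto_of_tendsto_of_le_of_le hlowtend tendsto_const_nhds hlow hup
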